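/- arXiv:2603.17536 — 8 statements merged into one kernel-verified Lean document; each statement's English description precedes it below -/
import Mathlib

section
/- Let V : H → ℝ, C, α > 0 satisfy 0 ≤ V(y) ≤ C·‖y‖² for all y ∈ H (V is positive semidefinite and PIE bounded). Let x be a trajectory of the PIE T ẋ = A x, and suppose there is d : ℝ → ℝ such that for every t ≥ 0 the function s ↦ V(x(s)) has derivative d(t) at t and d(t) ≤ −α·‖T(x(t))‖² (the derivative of V along the trajectory is PDE negative). Then for every b ≥ 0, ∫₀ᵇ ‖T(x(t))‖² dt ≤ (C/α)·‖x(0)‖², i.e., the trajectory satisfies the finite-energy PIE-to-PDE stability bound. -/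
open MeasureTheory

/-- A positive semidefinite, PIE bounded Lyapunov function `V`
(`0 ≤ V y ≤ C‖y‖²`) whose derivative along a trajectory of the PIE `T ẋ = A x`
is PDE negative (`d t ≤ -α‖T (x t)‖²`) certifies the finite-energy PIE-to-PDE
stability bound `∫₀ᵇ ‖T (x t)‖² dt ≤ (C/α)‖x 0‖²` for every `b ≥ 0`. -/
theorem fe_pie_to_pde_stability
    {H : Type*} [NormedAddCommGroup H] [InnerProductSpace ℝ H] [CompleteSpace H]
    (T A : H →L[ℝ] H) (V : H → ℝ) (C α : ℝ) (hC : 0 < C) (hα : 0 < α)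
    (hlow : ∀ y : H, 0 ≤ V y)
    (hup : ∀ y : H, V y ≤ C * ‖y‖ ^ 2)
    (x : ℝ → H) (hx : Differentiable ℝ x)
    (hpie : ∀ t : ℝ, 0 ≤ t → T (deriv x t) = A (x t))
    (d : ℝ → ℝ)
    (hd : ∀ t : ℝ, 0 ≤ t → HasDerivAt (fun s => V (x s)) (d t) t)
    (hdneg : ∀ t : ℝ, 0 ≤ t → d t ≤ -α * ‖T (x t)‖ ^ 2) :
    ∀ b : ℝ, 0 ≤ b → (∫ t in Set.Icc (0 : ℝ) b, ‖T (x t)‖ ^ 2) ≤ C / α * ‖x 0‖ ^ 2 := by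
  intro b hb
  set f : ℝ → ℝ := fun t => ‖T (x t)‖ ^ 2 with hf
  have hcont : Continuous f := ((T.continuous.comp hx.continuous).norm.pow 2)
  set g : ℝ → ℝ := fun t => V (x t) + α * ∫ s in (0:ℝ)..t, f s with hg
  -- g has derivative d t + α * f t at every t ≥ 0
  have hg' : ∀ t : ℝ, 0 ≤ t → HasDerivAt g (d t + α * f t) t := by
    intro t ht
    have hint : HasDerivAt (fun u => ∫ s in (0:ℝ)..u, f s) (f t) t := by
      exact intervalIntegral.integral_hasDerivAt_right
        (hcont.intervalIntegrable _ _)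
        (hcont.stronglyMeasurableAtFilter _ _) hcont.continuousAt
    exact (hd t ht).add ((hint.const_mul α))
  -- g is antitone on [0, b]
  have hanti : AntitoneOn g (Set.Icc 0 b) := by
    apply antitoneOn_of_deriv_nonpos (convex_Icc 0 b)
    · intro t ht
      exact (hg' t ht.1).continuousAt.continuousWithinAt
    · intro t ht
      rw [interior_Icc] at ht
      exact (hg' t ht.1.le).differentiableAt.differentiableWithinAt
    · intro t ht
      rw [interior_Icc] at ht
      rw [(hg' t ht.1.le).deriv]
      have h1 := hdneg t ht.1.le
      simp only [hf]
      linarith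
  have hgb : g b ≤ g 0 := hanti (Set.mem_Icc.2 ⟨le_refl 0, hb⟩) (Set.mem_Icc.2 ⟨hb, le_refl b⟩) hb
  have h0 : g 0 = V (x 0) := by simp [hg]
  have hkey : α * ∫ s in (0:ℝ)..b, f s ≤ C * ‖x 0‖ ^ 2 := by
    have := hlow (x b)
    have := hup (x 0)
    rw [h0] at hgb
    simp only [hg] at hgb
    linarith
  have hIcc : (∫ t in Set.Icc (0:ℝ) b, f t) = ∫ s in (0:ℝ)..b, f s := by
    rw [intervalIntegral.integral_of_le hb, integral_Icc_eq_integral_Ioc]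
  rw [hIcc]
  rw [div_mul_eq_mul_div, le_div_iff₀ hα, mul_comm]
  exact hkey
end

section
/- Let V : H → ℝ, C, α > 0 satisfy 0 ≤ V(y) ≤ C·‖y‖² for all y ∈ H (V is positive semidefinite and PIE bounded). Let x be a trajectory of the PIE T ẋ = A x, and suppose there is d : ℝ → ℝ such that for every t ≥ 0 the function s ↦ V(x(s)) has derivative d(t) at t and d(t) ≤ −α·‖x(t)‖² (the derivative of V along the trajectory is PIE negative). Then for every b ≥ 0, ∫₀ᵇ ‖x(t)‖² dt ≤ (C/α)·‖x(0)‖², i.e., the trajectory satisfies the finite-energy PIE stability bound. -/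
open MeasureTheory

/-- A positive semidefinite, PIE bounded Lyapunov function `V`
(`0 ≤ V y ≤ C‖y‖²`) whose derivative along a trajectory of the PIE `T ẋ = A x`
is PIE negative (`d t ≤ -α‖x t‖²`) certifies the finite-energy PIE
stability bound `∫₀ᵇ ‖x t‖² dt ≤ (C/α)‖x 0‖²` for every `b ≥ 0`. -/
theorem fe_pie_stability
    {H : Type*} [NormedAddCommGroup H] [InnerProductSpace ℝ H] [CompleteSpace H]
    (T A : H →L[ℝ] H) (V : H → ℝ) (C α : ℝ) (hC : 0 < C) (hα : 0 < α)
    (hlow : ∀ y : H, 0 ≤ V y)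
    (hup : ∀ y : H, V y ≤ C * ‖y‖ ^ 2)
    (x : ℝ → H) (hx : Differentiable ℝ x)
    (hpie : ∀ t : ℝ, 0 ≤ t → T (deriv x t) = A (x t))
    (d : ℝ → ℝ)
    (hd : ∀ t : ℝ, 0 ≤ t → HasDerivAt (fun s => V (x s)) (d t) t)
    (hdneg : ∀ t : ℝ, 0 ≤ t → d t ≤ -α * ‖x t‖ ^ 2) :
    ∀ b : ℝ, 0 ≤ b → (∫ t in Set.Icc (0 : ℝ) b, ‖x t‖ ^ 2) ≤ C / α * ‖x 0‖ ^ 2 := by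
  intro b hb
  have hcont : Continuous (fun t : ℝ => ‖x t‖ ^ 2) := (hx.continuous.norm.pow 2)
  set F : ℝ → ℝ := fun t => ∫ s in (0:ℝ)..t, ‖x s‖ ^ 2 with hF
  have hFderiv : ∀ t : ℝ, HasDerivAt F (‖x t‖ ^ 2) t := by
    intro t
    exact intervalIntegral.integral_hasDerivAt_right
      (hcont.intervalIntegrable _ _)
      (hcont.stronglyMeasurableAtFilter _ _)
      hcont.continuousAt
  set g : ℝ → ℝ := fun t => V (x t) + α * F t with hg
  have hgderiv : ∀ t : ℝ, 0 ≤ t → HasDerivAt g (d t + α * ‖x t‖ ^ 2) t := by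
    intro t ht
    exact (hd t ht).add ((hFderiv t).const_mul α)
  have hanti : AntitoneOn g (Set.Icc 0 b) := by
    apply antitoneOn_of_deriv_nonpos (convex_Icc 0 b)
    · intro t ht
      exact ((hgderiv t ht.1).continuousAt).continuousWithinAt
    · intro t ht
      rw [interior_Icc] at ht
      exact ((hgderiv t ht.1.le).differentiableAt).differentiableWithinAt
    · intro t ht
      rw [interior_Icc] at ht
      rw [(hgderiv t ht.1.le).deriv]
      have := hdneg t ht.1.le
      nlinarith [sq_nonneg ‖x t‖]
  have hgb : g b ≤ g 0 := hanti (Set.left_mem_Icc.2 hb) (Set.mem_Icc.2 ⟨hb, le_refl b⟩) hb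
  have hF0 : F 0 = 0 := intervalIntegral.integral_same
  have key : α * F b ≤ C * ‖x 0‖ ^ 2 := by
    have h1 : V (x b) + α * F b ≤ V (x 0) + α * 0 := by
      simpa [hg, hF0] using hgb
    have := hlow (x b)
    have := hup (x 0)
    linarith
  have hFb : F b = ∫ t in Set.Icc (0:ℝ) b, ‖x t‖ ^ 2 := by
    simp only [hF]; rw [intervalIntegral.integral_of_le hb, MeasureTheory.integral_Icc_eq_integral_Ioc]
  rw [← hFb]
  rw [div_mul_eq_mul_div, le_div_iff₀ hα]
  linarith [key]
end

section
/- Let V : H → ℝ, C, α > 0 satisfy 0 ≤ V(y) ≤ C·‖T(y)‖² for all y ∈ H (V is positive semidefinite and PDE bounded). Let x be a trajectory of the PIE T ẋ = A x, and suppose there is d : ℝ → ℝ such that for every t ≥ 0 the function s ↦ V(x(s)) has derivative d(t) at t and d(t) ≤ −α·‖T(x(t))‖² (the derivative of V along the trajectory is PDE negative). Then for every b ≥ 0, ∫₀ᵇ ‖T(x(t))‖² dt ≤ (C/α)·‖T(x(0))‖², i.e., the trajectory satisfies the finite-energy PDE stability bound. -/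
open MeasureTheory

/-- A positive semidefinite, PDE bounded Lyapunov function `V`
(`0 ≤ V y ≤ C‖T y‖²`) whose derivative along a trajectory of the PIE `T ẋ = A x`
is PDE negative (`d t ≤ -α‖T (x t)‖²`) certifies the finite-energy PDE
stability bound `∫₀ᵇ ‖T (x t)‖² dt ≤ (C/α)‖T (x 0)‖²` for every `b ≥ 0`. -/
theorem fe_pde_stability
    {H : Type*} [NormedAddCommGroup H] [InnerProductSpace ℝ H] [CompleteSpace H]
    (T A : H →L[ℝ] H) (V : H → ℝ) (C α : ℝ) (hC : 0 < C) (hα : 0 < α)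
    (hlow : ∀ y : H, 0 ≤ V y)
    (hup : ∀ y : H, V y ≤ C * ‖T y‖ ^ 2)
    (x : ℝ → H) (hx : Differentiable ℝ x)
    (hpie : ∀ t : ℝ, 0 ≤ t → T (deriv x t) = A (x t))
    (d : ℝ → ℝ)
    (hd : ∀ t : ℝ, 0 ≤ t → HasDerivAt (fun s => V (x s)) (d t) t)
    (hdneg : ∀ t : ℝ, 0 ≤ t → d t ≤ -α * ‖T (x t)‖ ^ 2) :
    ∀ b : ℝ, 0 ≤ b →
      (∫ t in Set.Icc (0 : ℝ) b, ‖T (x t)‖ ^ 2) ≤ C / α * ‖T (x 0)‖ ^ 2 := by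
  intro b hb
  have hcont : Continuous fun s => ‖T (x s)‖ ^ 2 :=
    ((T.continuous.comp hx.continuous).norm.pow 2)
  set g : ℝ → ℝ := fun t => V (x t) + α * ∫ s in (0:ℝ)..t, ‖T (x s)‖ ^ 2 with hg
  have hgd : ∀ t : ℝ, 0 ≤ t → HasDerivAt g (d t + α * ‖T (x t)‖ ^ 2) t := by
    intro t ht
    have hF : HasDerivAt (fun u => ∫ s in (0:ℝ)..u, ‖T (x s)‖ ^ 2) (‖T (x t)‖ ^ 2) t :=
      intervalIntegral.integral_hasDerivAt_right (hcont.intervalIntegrable 0 t)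
        (hcont.stronglyMeasurableAtFilter _ _) hcont.continuousAt
    exact (hd t ht).add (hF.const_mul α)
  have hanti : AntitoneOn g (Set.Ici (0:ℝ)) := by
    apply antitoneOn_of_deriv_nonpos (convex_Ici 0)
    · intro t ht
      exact ((hgd t ht).continuousAt).continuousWithinAt
    · intro t ht
      rw [interior_Ici] at ht
      exact (hgd t (le_of_lt ht)).differentiableAt.differentiableWithinAt
    · intro t ht
      rw [interior_Ici] at ht
      rw [(hgd t (le_of_lt ht)).deriv]
      have := hdneg t (le_of_lt ht)
      nlinarith
  have hgb : g b ≤ g 0 := hanti Set.self_mem_Ici hb hb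
  have hg0 : g 0 = V (x 0) := by simp [hg]
  have hI : α * ∫ s in (0:ℝ)..b, ‖T (x s)‖ ^ 2 ≤ C * ‖T (x 0)‖ ^ 2 := by
    have h1 := hlow (x b)
    have h2 := hup (x 0)
    have : g b ≤ V (x 0) := hg0 ▸ hgb
    simp only [hg] at this
    linarith
  have heq : (∫ t in Set.Icc (0:ℝ) b, ‖T (x t)‖ ^ 2) =
      ∫ s in (0:ℝ)..b, ‖T (x s)‖ ^ 2 := by
    rw [intervalIntegral.integral_of_le hb, MeasureTheory.integral_Icc_eq_integral_Ioc]
  rw [heq, div_mul_eq_mul_div, le_div_iff₀ hα]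
  nlinarith [hI]
end

section
/- Let x be a trajectory of the PIE T ẋ = A x whose derivative x' is continuous on [0, ∞), and suppose the function t ↦ ‖x(t)‖² is Lebesgue integrable on [0, ∞). Then ‖T(x(t))‖ tends to 0 as t → ∞. -/
open MeasureTheory

/-- If `x` is a trajectory of the PIE `T ẋ = A x` with derivative
continuous on `[0, ∞)`, and `t ↦ ‖x t‖²` is Lebesgue integrable on `[0, ∞)`,
then `‖T (x t)‖ → 0` as `t → ∞`. -/
theorem fe_pie_implies_pde_decay
    {H : Type*} [NormedAddCommGroup H] [InnerProductSpace ℝ H] [CompleteSpace H]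
    (T A : H →L[ℝ] H)
    (x : ℝ → H) (hx : Differentiable ℝ x)
    (hpie : ∀ t : ℝ, 0 ≤ t → T (deriv x t) = A (x t))
    (hcont : ContinuousOn (deriv x) (Set.Ici (0 : ℝ)))
    (hint : IntegrableOn (fun t => ‖x t‖ ^ 2) (Set.Ici (0 : ℝ))) :
    Filter.Tendsto (fun t => ‖T (x t)‖) Filter.atTop (nhds 0) := by
  set g : ℝ → ℝ := fun t => ‖T (x t)‖ ^ 2 with hgdef
  set φ : ℝ → ℝ := fun t => 2 * inner ℝ (A (x t)) (T (x t)) with hφdef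
  have hxc : Continuous x := hx.continuous
  have hφc : Continuous φ := by
    apply Continuous.mul continuous_const
    exact ((A.continuous.comp hxc).inner (T.continuous.comp hxc))
  have hgc : Continuous g := ((T.continuous.comp hxc).norm.pow 2)
  have hTx : ∀ t, HasDerivAt (fun s => T (x s)) (T (deriv x t)) t := fun t =>
    T.hasFDerivAt.comp_hasDerivAt t (hx t).hasDerivAt
  have hderiv : ∀ t ∈ Set.Ici (0:ℝ), HasDerivAt g (φ t) t := by
    intro t ht
    have h1 : HasDerivAt (fun s => (inner ℝ (T (x s)) (T (x s)) : ℝ))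
        ((inner ℝ (T (x t)) (T (deriv x t)) : ℝ) + inner ℝ (T (deriv x t)) (T (x t))) t :=
      HasDerivAt.inner ℝ (hTx t) (hTx t)
    have h2 : g = fun s => (inner ℝ (T (x s)) (T (x s)) : ℝ) := by
      funext s; rw [hgdef]; simp [real_inner_self_eq_norm_sq]
    rw [h2]
    convert h1 using 1
    rw [hφdef, hpie t ht]
    simp [real_inner_comm]
    ring
  -- bound on φ
  have hbound : ∀ t, ‖φ t‖ ≤ (2 * ‖A‖ * ‖T‖) * ‖x t‖ ^ 2 := by
    intro t
    have h1 : |(inner ℝ (A (x t)) (T (x t)) : ℝ)| ≤ ‖A (x t)‖ * ‖T (x t)‖ :=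
      abs_real_inner_le_norm _ _
    have h2 : ‖A (x t)‖ ≤ ‖A‖ * ‖x t‖ := A.le_opNorm _
    have h3 : ‖T (x t)‖ ≤ ‖T‖ * ‖x t‖ := T.le_opNorm _
    have hn : (0:ℝ) ≤ ‖x t‖ := norm_nonneg _
    have h4 : ‖A (x t)‖ * ‖T (x t)‖ ≤ (‖A‖ * ‖x t‖) * (‖T‖ * ‖x t‖) :=
      mul_le_mul h2 h3 (norm_nonneg _) (mul_nonneg (norm_nonneg _) hn)
    have h5 : ‖φ t‖ = 2 * |(inner ℝ (A (x t)) (T (x t)) : ℝ)| := by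
      rw [hφdef]; simp [Real.norm_eq_abs, abs_mul]
    rw [h5]; nlinarith [abs_nonneg (inner ℝ (A (x t)) (T (x t)) : ℝ)]
  have hφint : IntegrableOn φ (Set.Ici (0:ℝ)) := by
    refine Integrable.mono' (hint.const_mul (2 * ‖A‖ * ‖T‖)) hφc.aestronglyMeasurable.restrict
      (Filter.Eventually.of_forall fun t => ?_)
    exact hbound t
  have hφint' : IntegrableOn φ (Set.Ioi (0:ℝ)) := hφint.mono_set Set.Ioi_subset_Ici_self
  have key : ∀ b : ℝ, 0 ≤ b → (∫ t in (0:ℝ)..b, φ t) = g b - g 0 := by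
    intro b hb
    apply intervalIntegral.integral_eq_sub_of_hasDerivAt
    · intro t ht
      rw [Set.uIcc_of_le hb] at ht
      exact hderiv t ht.1
    · exact hφc.intervalIntegrable _ _
  have hIoi := MeasureTheory.intervalIntegral_tendsto_integral_Ioi 0 hφint' Filter.tendsto_id
  have hgtend : Filter.Tendsto g Filter.atTop
      (nhds (g 0 + ∫ t in Set.Ioi (0:ℝ), φ t)) := by
    have := (hIoi.const_add (g 0))
    refine this.congr' ?_
    filter_upwards [Filter.eventually_ge_atTop (0:ℝ)] with b hb
    simp only [id_eq]; rw [key b hb]; ring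
  -- g integrable
  have hgint : IntegrableOn g (Set.Ici (0:ℝ)) := by
    refine Integrable.mono' (hint.const_mul (‖T‖^2)) hgc.aestronglyMeasurable.restrict
      (Filter.Eventually.of_forall fun t => ?_)
    have h3 : ‖T (x t)‖ ≤ ‖T‖ * ‖x t‖ := T.le_opNorm _
    have : ‖g t‖ = ‖T (x t)‖^2 := by
      simp [hgdef, Real.norm_eq_abs, abs_pow, abs_norm]
    rw [this]
    nlinarith [norm_nonneg (T (x t)), norm_nonneg (x t), norm_nonneg (T : H →L[ℝ] H)]
  set L := g 0 + ∫ t in Set.Ioi (0:ℝ), φ t with hL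
  have hL0 : L = 0 := by
    by_contra hLne
    have hLpos : 0 < L := by
      rcases lt_or_gt_of_ne hLne with h | h
      · exfalso
        have : 0 ≤ L := ge_of_tendsto hgtend
          (Filter.Eventually.of_forall fun t => sq_nonneg _)
        linarith
      · exact h
    have hev : ∀ᶠ t in Filter.atTop, L/2 ≤ g t := by
      have := hgtend.eventually_const_le (show L/2 < L by linarith)
      exact this
    obtain ⟨M, hM⟩ := hev.exists_forall_of_atTop
    set M' := max M 0 with hM'
    have hMint : IntegrableOn g (Set.Ici M') :=
      hgint.mono_set (Set.Ici_subset_Ici.mpr (le_max_right _ _))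
    have hconst : IntegrableOn (fun _ : ℝ => L/2) (Set.Ici M') := by
      refine Integrable.mono' hMint aestronglyMeasurable_const ?_
      rw [ae_restrict_iff' measurableSet_Ici]
      refine Filter.Eventually.of_forall fun t ht => ?_
      have := hM t (le_trans (le_max_left _ _) ht)
      rw [Real.norm_eq_abs, abs_of_nonneg (by linarith : (0:ℝ) ≤ L/2)]
      exact this
    rw [integrableOn_const_iff] at hconst
    rcases hconst with h | h
    · simp at h; linarith
    · simp [Real.volume_Ici] at h
  rw [hL0] at hgtend
  have : Filter.Tendsto (fun t => Real.sqrt (g t)) Filter.atTop (nhds 0) := by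
    have := (Real.continuous_sqrt.tendsto 0).comp hgtend
    simpa [Function.comp_def] using this
  refine this.congr fun t => ?_
  rw [hgdef]
  exact Real.sqrt_sq (norm_nonneg _)
end

section
/- Let Q be a continuous linear operator on H and ε > 0. Suppose: (i) the composition Q∘T is self-adjoint, i.e., ⟪Q(T(y)), z⟫ = ⟪y, Q(T(z))⟫ for all y, z ∈ H; (ii) ⟪y, Q(T(y))⟫ ≥ ε·‖T(y)‖² for all y ∈ H; and (iii) 2·⟪y, Q(A(y))⟫ ≤ 0 for all y ∈ H. Then every trajectory x of the PIE T ẋ = A x satisfies ε·‖T(x(t))‖² ≤ ‖Q∘T‖·‖x(0)‖² for all t ≥ 0; in particular the PIE is Lyapunov PIE-to-PDE stable. -/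
/-- Operator-inequality condition for Lyapunov PIE-to-PDE stability.
If `Q ∘ T` is self-adjoint, `⟪y, Q(T y)⟫ ≥ ε‖T y‖²`, and `2⟪y, Q(A y)⟫ ≤ 0`, then
every trajectory of the PIE `T ẋ = A x` satisfies
`ε‖T (x t)‖² ≤ ‖Q ∘ T‖ ‖x 0‖²` for all `t ≥ 0`. -/
theorem lpi_pie_to_pde_stability
    {H : Type*} [NormedAddCommGroup H] [InnerProductSpace ℝ H] [CompleteSpace H]
    (T A Q : H →L[ℝ] H) (ε : ℝ) (hε : 0 < ε)
    (hsa : ∀ y z : H, (inner ℝ (Q (T y)) z : ℝ) = (inner ℝ y (Q (T z)) : ℝ))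
    (hpos : ∀ y : H, (inner ℝ y (Q (T y)) : ℝ) ≥ ε * ‖T y‖ ^ 2)
    (hneg : ∀ y : H, 2 * (inner ℝ y (Q (A y)) : ℝ) ≤ 0) :
    ∀ x : ℝ → H, Differentiable ℝ x →
      (∀ t : ℝ, 0 ≤ t → T (deriv x t) = A (x t)) →
      ∀ t : ℝ, 0 ≤ t → ε * ‖T (x t)‖ ^ 2 ≤ ‖Q.comp T‖ * ‖x 0‖ ^ 2 := by
  intro x hx hT t ht
  set V : ℝ → ℝ := fun s => (inner ℝ (x s) (Q (T (x s))) : ℝ) with hV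
  have hVderiv : ∀ s : ℝ, HasDerivAt V
      ((inner ℝ (x s) (Q (T (deriv x s))) : ℝ) + (inner ℝ (deriv x s) (Q (T (x s))) : ℝ)) s := by
    intro s
    have h1 : HasDerivAt x (deriv x s) s := (hx s).hasDerivAt
    have h2 : HasDerivAt (fun u => Q (T (x u))) (Q (T (deriv x s))) s :=
      ((Q.comp T).hasFDerivAt.comp_hasDerivAt s h1)
    exact h1.inner ℝ h2
  -- V is antitone on [0, ∞)
  have hmono : AntitoneOn V (Set.Ici (0 : ℝ)) := by
    apply antitoneOn_of_deriv_nonpos (convex_Ici 0)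
    · have hVd : Differentiable ℝ V := fun s => (hVderiv s).differentiableAt
      exact hVd.continuous.continuousOn
    · intro s _
      exact (hVderiv s).differentiableAt.differentiableWithinAt
    · intro s hs
      rw [interior_Ici] at hs
      rw [(hVderiv s).deriv]
      have hsa' : (inner ℝ (deriv x s) (Q (T (x s))) : ℝ) = (inner ℝ (x s) (Q (T (deriv x s))) : ℝ) := by
        rw [real_inner_comm]
        exact hsa (x s) (deriv x s)
      rw [hsa', hT s (le_of_lt hs)]
      have := hneg (x s)
      linarith
  have hV0 : V t ≤ V 0 := hmono Set.self_mem_Ici ht ht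
  have hVbound : V 0 ≤ ‖Q.comp T‖ * ‖x 0‖ ^ 2 := by
    have h1 : (inner ℝ (x 0) (Q (T (x 0))) : ℝ) ≤ ‖x 0‖ * ‖(Q.comp T) (x 0)‖ :=
      real_inner_le_norm _ _
    have h2 : ‖(Q.comp T) (x 0)‖ ≤ ‖Q.comp T‖ * ‖x 0‖ := (Q.comp T).le_opNorm _
    calc V 0 ≤ ‖x 0‖ * ‖(Q.comp T) (x 0)‖ := h1
      _ ≤ ‖x 0‖ * (‖Q.comp T‖ * ‖x 0‖) := by
          exact mul_le_mul_of_nonneg_left h2 (norm_nonneg _)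
      _ = ‖Q.comp T‖ * ‖x 0‖ ^ 2 := by ring
  have := hpos (x t)
  calc ε * ‖T (x t)‖ ^ 2 ≤ V t := this
    _ ≤ V 0 := hV0
    _ ≤ ‖Q.comp T‖ * ‖x 0‖ ^ 2 := hVbound
end

section
/- Let P be a continuous linear operator on H with ‖P‖ > 0 and ε, α > 0. Suppose: (i) P is self-adjoint, i.e., ⟪P(y), z⟫ = ⟪y, P(z)⟫ for all y, z ∈ H; (ii) ⟪y, P(y)⟫ ≥ ε·‖y‖² for all y ∈ H; and (iii) 2·⟪T(y), P(A(y))⟫ ≤ −α·‖T(y)‖² for all y ∈ H. Then every trajectory x of the PIE T ẋ = A x satisfies ε·‖T(x(t))‖² ≤ ‖P‖·exp(−(α/‖P‖)·t)·‖T(x(0))‖² for all t ≥ 0; in particular the PIE is exponentially PDE stable. -/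
/-- Operator-inequality condition for exponential PDE stability.
If `P` is self-adjoint with `‖P‖ > 0`, `⟪y, P y⟫ ≥ ε‖y‖²`, and
`2⟪T y, P (A y)⟫ ≤ -α‖T y‖²`, then every trajectory of the PIE `T ẋ = A x`
satisfies `ε‖T (x t)‖² ≤ ‖P‖ exp(-(α/‖P‖) t) ‖T (x 0)‖²` for all `t ≥ 0`. -/
theorem lpi_exp_pde_stability
    {H : Type*} [NormedAddCommGroup H] [InnerProductSpace ℝ H] [CompleteSpace H]
    (T A P : H →L[ℝ] H) (ε α : ℝ) (hε : 0 < ε) (hα : 0 < α) (hP : 0 < ‖P‖)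
    (hsa : ∀ y z : H, (inner ℝ (P y) z : ℝ) = (inner ℝ y (P z) : ℝ))
    (hpos : ∀ y : H, (inner ℝ y (P y) : ℝ) ≥ ε * ‖y‖ ^ 2)
    (hneg : ∀ y : H, 2 * (inner ℝ (T y) (P (A y)) : ℝ) ≤ -α * ‖T y‖ ^ 2) :
    ∀ x : ℝ → H, Differentiable ℝ x →
      (∀ t : ℝ, 0 ≤ t → T (deriv x t) = A (x t)) →
      ∀ t : ℝ, 0 ≤ t →
        ε * ‖T (x t)‖ ^ 2 ≤ ‖P‖ * Real.exp (-(α / ‖P‖) * t) * ‖T (x 0)‖ ^ 2 := by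
  intro x hx hode t ht
  set K : ℝ := -(α / ‖P‖) with hK
  set f : ℝ → ℝ := fun s => (inner ℝ (T (x s)) (P (T (x s))) : ℝ) with hf
  -- derivative of f
  have hu : ∀ s : ℝ, HasDerivAt (fun s => T (x s)) (T (deriv x s)) s := fun s =>
    T.hasFDerivAt.comp_hasDerivAt s (hx s).hasDerivAt
  have hfd : ∀ s : ℝ, HasDerivAt f
      ((inner ℝ (T (deriv x s)) (P (T (x s))) : ℝ)
        + (inner ℝ (T (x s)) (P (T (deriv x s))) : ℝ)) s := by
    intro s
    have := ((hu s).inner ℝ (P.hasFDerivAt.comp_hasDerivAt s (hu s)))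
    rw [add_comm] at this
    exact this
  -- f' bound on Ico 0 t
  have bound : ∀ s ∈ Set.Ico (0:ℝ) t,
      (inner ℝ (T (deriv x s)) (P (T (x s))) : ℝ)
        + (inner ℝ (T (x s)) (P (T (deriv x s))) : ℝ) ≤ K * f s + 0 := by
    intro s hs
    have h1 : (inner ℝ (T (deriv x s)) (P (T (x s))) : ℝ)
        = (inner ℝ (T (x s)) (P (T (deriv x s))) : ℝ) := by
      rw [← hsa]; exact real_inner_comm _ _
    have hTd : T (deriv x s) = A (x s) := hode s hs.1
    have h2 : 2 * (inner ℝ (T (x s)) (P (A (x s))) : ℝ) ≤ -α * ‖T (x s)‖ ^ 2 := hneg (x s)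
    have hfs_le : f s ≤ ‖P‖ * ‖T (x s)‖ ^ 2 := by
      calc f s ≤ ‖T (x s)‖ * ‖P (T (x s))‖ := real_inner_le_norm _ _
        _ ≤ ‖T (x s)‖ * (‖P‖ * ‖T (x s)‖) := by
            gcongr; exact P.le_opNorm _
        _ = ‖P‖ * ‖T (x s)‖ ^ 2 := by ring
    have hKf : K * (‖P‖ * ‖T (x s)‖ ^ 2) ≤ K * f s := by
      apply mul_le_mul_of_nonpos_left hfs_le
      have : 0 < α / ‖P‖ := div_pos hα hP
      simp [hK]; linarith
    have : (inner ℝ (T (deriv x s)) (P (T (x s))) : ℝ)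
        + (inner ℝ (T (x s)) (P (T (deriv x s))) : ℝ)
        = 2 * (inner ℝ (T (x s)) (P (A (x s))) : ℝ) := by
      rw [h1, hTd]; ring
    rw [this, add_zero]
    calc 2 * (inner ℝ (T (x s)) (P (A (x s))) : ℝ) ≤ -α * ‖T (x s)‖ ^ 2 := h2
      _ = K * (‖P‖ * ‖T (x s)‖ ^ 2) := by
          rw [hK, neg_mul, neg_mul, ← mul_assoc, div_mul_cancel₀ _ hP.ne']
      _ ≤ K * f s := hKf
  have hcont : ContinuousOn f (Set.Icc 0 t) := fun s _ => ((hfd s).continuousAt).continuousWithinAt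
  have key := le_gronwallBound_of_liminf_deriv_right_le hcont
    (fun s hs r hr => ((hfd s).hasDerivWithinAt.liminf_right_slope_le hr))
    (le_refl (f 0)) bound t (Set.mem_Icc.2 ⟨ht, le_refl t⟩)
  rw [gronwallBound_ε0, sub_zero] at key
  -- combine
  have h0 : ε * ‖T (x t)‖ ^ 2 ≤ f t := hpos (T (x t))
  have h1 : f 0 ≤ ‖P‖ * ‖T (x 0)‖ ^ 2 := by
    calc f 0 ≤ ‖T (x 0)‖ * ‖P (T (x 0))‖ := real_inner_le_norm _ _
      _ ≤ ‖T (x 0)‖ * (‖P‖ * ‖T (x 0)‖) := by gcongr; exact P.le_opNorm _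
      _ = ‖P‖ * ‖T (x 0)‖ ^ 2 := by ring
  have hexp : (0:ℝ) < Real.exp (K * t) := Real.exp_pos _
  calc ε * ‖T (x t)‖ ^ 2 ≤ f t := h0
    _ ≤ f 0 * Real.exp (K * t) := key
    _ ≤ ‖P‖ * ‖T (x 0)‖ ^ 2 * Real.exp (K * t) := by gcongr
    _ = ‖P‖ * Real.exp (-(α / ‖P‖) * t) * ‖T (x 0)‖ ^ 2 := by rw [hK]; ring
end

section
/- Let P be a continuous linear operator on H and α > 0. Suppose: (i) P is self-adjoint, i.e., ⟪P(y), z⟫ = ⟪y, P(z)⟫ for all y, z ∈ H; (ii) ⟪y, P(y)⟫ ≥ 0 for all y ∈ H; and (iii) 2·⟪T(y), P(A(y))⟫ ≤ −α·‖T(y)‖² for all y ∈ H. Then every trajectory x of the PIE T ẋ = A x satisfies, for every b ≥ 0, ∫₀ᵇ ‖T(x(t))‖² dt ≤ (1/α)·⟪T(x(0)), P(T(x(0)))⟫ ≤ (‖P‖/α)·‖T(x(0))‖²; in particular the PIE is finite-energy PDE stable. -/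
open MeasureTheory

/-- Operator-inequality condition for finite-energy PDE stability.
If `P` is self-adjoint, positive semidefinite, and `2⟪T y, P (A y)⟫ ≤ -α‖T y‖²`,
then every trajectory of the PIE `T ẋ = A x` satisfies, for every `b ≥ 0`,
`∫₀ᵇ ‖T (x t)‖² dt ≤ (1/α)⟪T (x 0), P (T (x 0))⟫ ≤ (‖P‖/α)‖T (x 0)‖²`. -/
theorem lpi_fe_pde_stability
    {H : Type*} [NormedAddCommGroup H] [InnerProductSpace ℝ H] [CompleteSpace H]
    (T A P : H →L[ℝ] H) (α : ℝ) (hα : 0 < α)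
    (hsa : ∀ y z : H, (inner ℝ (P y) z : ℝ) = (inner ℝ y (P z) : ℝ))
    (hpos : ∀ y : H, (0 : ℝ) ≤ (inner ℝ y (P y) : ℝ))
    (hneg : ∀ y : H, 2 * (inner ℝ (T y) (P (A y)) : ℝ) ≤ -α * ‖T y‖ ^ 2) :
    ∀ x : ℝ → H, Differentiable ℝ x →
      (∀ t : ℝ, 0 ≤ t → T (deriv x t) = A (x t)) →
      ∀ b : ℝ, 0 ≤ b →
        (∫ t in Set.Icc (0 : ℝ) b, ‖T (x t)‖ ^ 2)
            ≤ 1 / α * (inner ℝ (T (x 0)) (P (T (x 0))) : ℝ) ∧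
        1 / α * (inner ℝ (T (x 0)) (P (T (x 0))) : ℝ) ≤ ‖P‖ / α * ‖T (x 0)‖ ^ 2 := by
  intro x hx hderiv b hb
  constructor
  · -- main energy inequality
    set u : ℝ → H := fun t => T (x t) with hu_def
    have hucont : Continuous u := T.continuous.comp hx.continuous
    have hgcont : Continuous fun t => ‖u t‖ ^ 2 := (hucont.norm.pow 2)
    set f : ℝ → ℝ := fun t => (inner ℝ (u t) (P (u t)) : ℝ) with hf_def
    have hud : ∀ t : ℝ, HasDerivAt u (T (deriv x t)) t := fun t =>
      T.hasFDerivAt.comp_hasDerivAt t (hx t).hasDerivAt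
    have hfd : ∀ t : ℝ, HasDerivAt f
        ((inner ℝ (u t) (P (T (deriv x t))) : ℝ) + (inner ℝ (T (deriv x t)) (P (u t)) : ℝ)) t := by
      intro t
      have h1 : HasDerivAt (fun s => P (u s)) (P (T (deriv x t))) t :=
        P.hasFDerivAt.comp_hasDerivAt t (hud t)
      exact HasDerivAt.inner ℝ (hud t) h1
    set F : ℝ → ℝ := fun t => f t + α * ∫ s in (0:ℝ)..t, ‖u s‖ ^ 2 with hF_def
    have hFd : ∀ t : ℝ, HasDerivAt F
        (((inner ℝ (u t) (P (T (deriv x t))) : ℝ) + (inner ℝ (T (deriv x t)) (P (u t)) : ℝ))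
          + α * ‖u t‖ ^ 2) t := by
      intro t
      exact (hfd t).add (((hgcont.integral_hasStrictDerivAt 0 t).hasDerivAt).const_mul α)
    have hFanti : AntitoneOn F (Set.Icc 0 b) := by
      apply antitoneOn_of_deriv_nonpos (convex_Icc 0 b)
      · exact (continuous_iff_continuousAt.mpr fun s => (hFd s).continuousAt).continuousOn
      · intro t ht
        exact ((hFd t).differentiableAt).differentiableWithinAt
      · intro t ht
        rw [interior_Icc] at ht
        rw [(hFd t).deriv]
        have h0t : (0:ℝ) ≤ t := le_of_lt ht.1
        have hA : T (deriv x t) = A (x t) := hderiv t h0t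
        rw [hA]
        have hsym : (inner ℝ (u t) (P (A (x t))) : ℝ) = (inner ℝ (A (x t)) (P (u t)) : ℝ) := by
          rw [real_inner_comm, hsa]
        have := hneg (x t)
        have huxt : u t = T (x t) := rfl
        rw [huxt] at hsym ⊢
        nlinarith [this]
    have hFle : F b ≤ F 0 := hFanti (Set.left_mem_Icc.mpr hb) (Set.right_mem_Icc.mpr hb) hb
    have hF0 : F 0 = f 0 := by simp [hF_def]
    have hfb : 0 ≤ f b := hpos (u b)
    have hint : α * ∫ s in (0:ℝ)..b, ‖u s‖ ^ 2 ≤ f 0 := by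
      have : F b = f b + α * ∫ s in (0:ℝ)..b, ‖u s‖ ^ 2 := rfl
      linarith [hFle, hF0.symm ▸ hFle]
    have hIcc : (∫ t in Set.Icc (0 : ℝ) b, ‖T (x t)‖ ^ 2)
        = ∫ s in (0:ℝ)..b, ‖u s‖ ^ 2 := by
      rw [intervalIntegral.integral_of_le hb, integral_Icc_eq_integral_Ioc]
    rw [hIcc]
    have hfeq : f 0 = (inner ℝ (T (x 0)) (P (T (x 0))) : ℝ) := rfl
    rw [← hfeq]
    have h2 : (∫ s in (0:ℝ)..b, ‖u s‖ ^ 2) ≤ f 0 / α :=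
      (le_div_iff₀ hα).mpr (by linarith [hint, mul_comm α (∫ s in (0:ℝ)..b, ‖u s‖ ^ 2)])
    linarith [h2, (by ring : f 0 / α = 1 / α * f 0)]
  · -- norm bound
    have hy := real_inner_le_norm (T (x 0)) (P (T (x 0)))
    have hop := P.le_opNorm (T (x 0))
    have h1α : 0 ≤ 1 / α := by positivity
    have : (inner ℝ (T (x 0)) (P (T (x 0))) : ℝ) ≤ ‖P‖ * ‖T (x 0)‖ ^ 2 := by
      nlinarith [norm_nonneg (T (x 0)), norm_nonneg P]
    calc 1 / α * (inner ℝ (T (x 0)) (P (T (x 0))) : ℝ)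
        ≤ 1 / α * (‖P‖ * ‖T (x 0)‖ ^ 2) := by nlinarith
      _ = ‖P‖ / α * ‖T (x 0)‖ ^ 2 := by ring
end

section
/- Let a < b be real numbers, n ≥ 1 a natural number, and N_a, N_b real n×n matrices. For t ∈ ℝ let W(t) be the n×n matrix with entries W(t)_{i,j} = t^{j−i}/(j−i)! for i ≤ j and 0 for i > j (indices i, j ∈ {0, …, n−1}). Assume the matrix N_a + N_b·W(b−a) is invertible and set P = (N_a + N_b·W(b−a))⁻¹·N_b·W(b−a). Let e₁(s) ∈ ℝⁿ be the vector with i-th component s^i/i! and eₙ(θ) ∈ ℝⁿ the vector with i-th component θ^{n−1−i}/(n−1−i)! (i = 0, …, n−1). Define the kernel G(s,θ) = e₁(s−a)ᵀ·(I−P)·eₙ(a−θ) for θ ≤ s and G(s,θ) = −e₁(s−a)ᵀ·P·eₙ(a−θ) for s < θ, and the operator (T x)(s) = ∫ₐᵇ G(s,θ)·x(θ) dθ. Say that a function g satisfies the boundary conditions if for each i ∈ {0, …, n−1}: Σ_{j=0}^{n−1} (N_a)_{i,j}·g^{(j)}(a) + (N_b)_{i,j}·g^{(j)}(b) = 0,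 where g^{(j)} is the j-th derivative. Then: (1) for every continuous x : ℝ → ℝ, the function u = T x is n-times continuously differentiable on [a,b], satisfies the boundary conditions, and u^{(n)}(s) = x(s) for all s ∈ [a,b]; and (2) for every g : ℝ → ℝ that is n-times continuously differentiable on [a,b] and satisfies the boundary conditions, (T g^{(n)})(s) = g(s) for all s ∈ [a,b]. -/
open MeasureTheory Matrix

/-- The matrix `W(t)` with entries `W(t)_{i,j} = t^(j-i)/(j-i)!` for `i ≤ j`
and `0` otherwise. -/
noncomputable def Wmat (n : ℕ) (t : ℝ) : Matrix (Fin n) (Fin n) ℝ :=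
  fun i j => if (i : ℕ) ≤ (j : ℕ) then
    t ^ ((j : ℕ) - (i : ℕ)) / Nat.factorial ((j : ℕ) - (i : ℕ)) else 0

/-- The vector `e₁(s)` with `i`-th component `s^i/i!`. -/
noncomputable def e1vec (n : ℕ) (s : ℝ) : Fin n → ℝ :=
  fun i => s ^ (i : ℕ) / Nat.factorial (i : ℕ)

/-- The vector `eₙ(θ)` with `i`-th component `θ^(n-1-i)/(n-1-i)!`. -/
noncomputable def envec (n : ℕ) (θ : ℝ) : Fin n → ℝ :=
  fun i => θ ^ (n - 1 - (i : ℕ)) / Nat.factorial (n - 1 - (i : ℕ))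

open intervalIntegral

lemma binom_sum (m : ℕ) (u v : ℝ) :
    ∑ k ∈ Finset.range (m+1), u^k / (Nat.factorial k) * (v^(m-k) / (Nat.factorial (m-k)))
      = (u+v)^m / (Nat.factorial m) := by
  rw [add_pow, Finset.sum_div]
  refine Finset.sum_congr rfl fun k hk => ?_
  have hk' : k ≤ m := Nat.lt_succ_iff.mp (Finset.mem_range.mp hk)
  have h := Nat.choose_mul_factorial_mul_factorial hk'
  have h1 : ((Nat.factorial k) : ℝ) ≠ 0 := Nat.cast_ne_zero.mpr (Nat.factorial_ne_zero k)
  have h2 : ((Nat.factorial (m-k)) : ℝ) ≠ 0 := Nat.cast_ne_zero.mpr (Nat.factorial_ne_zero _)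
  have h3 : ((Nat.factorial m) : ℝ) ≠ 0 := Nat.cast_ne_zero.mpr (Nat.factorial_ne_zero m)
  have h' : ((m.choose k : ℝ) * (Nat.factorial k) * (Nat.factorial (m-k))) = (Nat.factorial m) := by
    exact_mod_cast congrArg Nat.cast h
  field_simp
  rw [← h']; ring

noncomputable def Afun (x : ℝ → ℝ) (a : ℝ) (p : ℕ) (t : ℝ) : ℝ :=
  ∫ θ in a..t, (-θ)^p / (Nat.factorial p) * x θ

noncomputable def Jfun (x : ℝ → ℝ) (a : ℝ) (m : ℕ) (s : ℝ) : ℝ :=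
  ∫ θ in a..s, (s-θ)^m / (Nat.factorial m) * x θ

lemma Acont (x : ℝ → ℝ) (hx : Continuous x) (a : ℝ) (p : ℕ) :
    Continuous (fun θ : ℝ => (-θ)^p / (Nat.factorial p) * x θ) := by
  fun_prop

lemma hasDerivAt_Afun {x : ℝ → ℝ} (hx : Continuous x) (a : ℝ) (p : ℕ) (t : ℝ) :
    HasDerivAt (Afun x a p) ((-t)^p / (Nat.factorial p) * x t) t := by
  refine integral_hasDerivAt_right ((Acont x hx a p).intervalIntegrable _ _)
    ?_ (Acont x hx a p).continuousAt
  exact (Acont x hx a p).stronglyMeasurable.stronglyMeasurableAtFilter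

lemma Jfun_eq_sum {x : ℝ → ℝ} (hx : Continuous x) (a : ℝ) (m : ℕ) (s : ℝ) :
    Jfun x a m s = ∑ k ∈ Finset.range (m+1),
      s^k / (Nat.factorial k) * Afun x a (m-k) s := by
  unfold Jfun Afun
  have h1 : ∀ θ : ℝ, (s-θ)^m / (Nat.factorial m) * x θ
      = ∑ k ∈ Finset.range (m+1), s^k / (Nat.factorial k) * ((-θ)^(m-k) / (Nat.factorial (m-k)) * x θ) := by
    intro θ
    have := binom_sum m s (-θ)
    rw [show s + -θ = s - θ by ring] at this
    rw [← this, Finset.sum_mul]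
    exact Finset.sum_congr rfl fun k _ => by ring
  rw [intervalIntegral.integral_congr (fun θ _ => h1 θ),
    intervalIntegral.integral_finset_sum]
  · exact Finset.sum_congr rfl fun k _ => intervalIntegral.integral_const_mul _ _
  · intro k _
    exact ((continuous_const.mul (Acont x hx a (m-k)))).intervalIntegrable _ _

lemma hasDerivAt_Jfun_zero {x : ℝ → ℝ} (hx : Continuous x) (a s : ℝ) :
    HasDerivAt (Jfun x a 0) (x s) s := by
  have h : Jfun x a 0 = fun t => ∫ θ in a..t, x θ := by
    funext t; unfold Jfun; simp
  rw [h]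
  exact integral_hasDerivAt_right (hx.intervalIntegrable _ _)
    hx.stronglyMeasurable.stronglyMeasurableAtFilter hx.continuousAt

lemma hasDerivAt_Jfun_succ {x : ℝ → ℝ} (hx : Continuous x) (a : ℝ) (m : ℕ) (s : ℝ) :
    HasDerivAt (Jfun x a (m+1)) (Jfun x a m s) s := by
  have heq : Jfun x a (m+1) = fun t => ∑ k ∈ Finset.range (m+2),
      t^k / (Nat.factorial k) * Afun x a (m+1-k) t := funext (Jfun_eq_sum hx a (m+1))
  rw [heq]
  have hterm : ∀ k ∈ Finset.range (m+2),
      HasDerivAt (fun t => t^k / (Nat.factorial k) * Afun x a (m+1-k) t)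
        ((k * s^(k-1) / (Nat.factorial k)) * Afun x a (m+1-k) s
          + s^k / (Nat.factorial k) * ((-s)^(m+1-k) / (Nat.factorial (m+1-k)) * x s)) s :=
    fun k _ => ((hasDerivAt_pow k s).div_const _).mul (hasDerivAt_Afun hx a _ s)
  refine (HasDerivAt.fun_sum hterm).congr_deriv ?_
  rw [Finset.sum_add_distrib]
  have h2 : ∑ k ∈ Finset.range (m+2),
      s^k / (Nat.factorial k) * ((-s)^(m+1-k) / (Nat.factorial (m+1-k)) * x s) = 0 := by
    have : ∑ k ∈ Finset.range (m+2),
        s^k / (Nat.factorial k) * ((-s)^(m+1-k) / (Nat.factorial (m+1-k)) * x s)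
        = (∑ k ∈ Finset.range (m+2),
            s^k / (Nat.factorial k) * ((-s)^(m+1-k) / (Nat.factorial (m+1-k)))) * x s := by
      rw [Finset.sum_mul]
      exact Finset.sum_congr rfl fun k _ => by ring
    rw [this, binom_sum (m+1) s (-s)]
    simp
  have h1 : ∑ k ∈ Finset.range (m+2),
      (k * s^(k-1) / (Nat.factorial k)) * Afun x a (m+1-k) s = Jfun x a m s := by
    rw [Finset.sum_range_succ']
    simp only [Nat.cast_zero, zero_mul, zero_div, Nat.factorial_zero]
    rw [Jfun_eq_sum hx a m s]
    have : ∀ j ∈ Finset.range (m+1),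
        ((j+1 : ℕ) : ℝ) * s^((j+1)-1) / (Nat.factorial (j+1)) * Afun x a (m+1-(j+1)) s
        = s^j / (Nat.factorial j) * Afun x a (m-j) s := by
      intro j _
      have : (m+1-(j+1)) = m - j := by omega
      rw [this, Nat.factorial_succ]
      have hj : ((Nat.factorial j) : ℝ) ≠ 0 := Nat.cast_ne_zero.mpr (Nat.factorial_ne_zero j)
      have hj1 : ((j:ℝ)+1) ≠ 0 := by positivity
      simp only [Nat.add_sub_cancel, Nat.cast_mul, Nat.cast_add, Nat.cast_one]
      field_simp
    rw [Finset.sum_congr rfl this]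
    simp
  rw [h1, h2, add_zero]
open MeasureTheory intervalIntegral

lemma chain_iteratedDerivWithin {a b : ℝ} (hab : a < b) (g : ℕ → ℝ → ℝ) (N : ℕ)
    (h : ∀ k < N, ∀ s : ℝ, HasDerivAt (g k) (g (k+1) s) s) :
    ∀ j, j ≤ N → Set.EqOn (iteratedDerivWithin j (g 0) (Set.Icc a b)) (g j) (Set.Icc a b) := by
  intro j
  induction j with
  | zero => intro _; simp [Set.EqOn]
  | succ j IH =>
    intro hj s hs
    have hu := uniqueDiffOn_Icc hab
    rw [iteratedDerivWithin_succ]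
    rw [derivWithin_congr (IH (by omega)) (IH (by omega) hs)]
    exact ((h j (by omega) s).hasDerivWithinAt).derivWithin (hu s hs)

lemma chain_contDiffOn {a b : ℝ} (hab : a < b) (g : ℕ → ℝ → ℝ) (N : ℕ)
    (h : ∀ k < N, ∀ s : ℝ, HasDerivAt (g k) (g (k+1) s) s)
    (hcont : Continuous (g N)) :
    ContDiffOn ℝ N (g 0) (Set.Icc a b) := by
  rw [contDiffOn_nat_iff_continuousOn_differentiableOn_deriv (uniqueDiffOn_Icc hab)]
  constructor
  · intro m hm
    apply ContinuousOn.congr _ (chain_iteratedDerivWithin hab g N h m hm)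
    rcases eq_or_lt_of_le hm with rfl | hlt
    · exact hcont.continuousOn
    · exact fun s _ => (h m hlt s).differentiableAt.continuousAt.continuousWithinAt
  · intro m hm
    apply DifferentiableOn.congr _ (chain_iteratedDerivWithin hab g N h m (le_of_lt hm))
    exact fun s _ => (h m hm s).differentiableAt.differentiableWithinAt

noncomputable def Qf (n : ℕ) (a : ℝ) (d : Fin n → ℝ) (j : ℕ) (s : ℝ) : ℝ :=
  ∑ i : Fin n,
    (if j ≤ (i:ℕ) then (s-a)^((i:ℕ)-j) / (Nat.factorial ((i:ℕ)-j)) else 0) * d i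

lemma hasDerivAt_Qf (n : ℕ) (a : ℝ) (d : Fin n → ℝ) (j : ℕ) (s : ℝ) :
    HasDerivAt (Qf n a d j) (Qf n a d (j+1) s) s := by
  unfold Qf
  refine HasDerivAt.fun_sum fun i _ => ?_
  by_cases hji : j ≤ (i:ℕ)
  · rcases eq_or_lt_of_le hji with heq | hlt
    · have h1 : ¬ (j+1 ≤ (i:ℕ)) := by omega
      have h2 : (i:ℕ) - j = 0 := by omega
      simp only [if_pos hji, if_neg h1, h2, pow_zero, Nat.factorial_zero, zero_mul]
      exact hasDerivAt_const s _
    · have h1 : j+1 ≤ (i:ℕ) := hlt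
      simp only [if_pos hji, if_pos h1]
      set p := (i:ℕ) - j with hp
      have hp1 : 1 ≤ p := by omega
      have hip : (i:ℕ) - (j+1) = p - 1 := by omega
      have hd : HasDerivAt (fun t : ℝ => (t-a)^p / (Nat.factorial p : ℝ) * d i)
          (((p:ℝ) * (s-a)^(p-1) * 1) / (Nat.factorial p : ℝ) * d i) s :=
        ((((hasDerivAt_id s).sub_const a).pow p).div_const
          (Nat.factorial p : ℝ)).mul_const (d i)
      refine hd.congr_deriv (Eq.symm ?_)
      rw [hip]
      have hpe : p = (p-1)+1 := by omega
      rw [hpe, Nat.factorial_succ]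
      have h2 : ((Nat.factorial (p-1)) : ℝ) ≠ 0 := Nat.cast_ne_zero.mpr (Nat.factorial_ne_zero _)
      have h3 : ((p-1 : ℕ):ℝ)+1 ≠ 0 := by positivity
      simp only [Nat.add_sub_cancel, Nat.cast_mul, Nat.cast_add, Nat.cast_one]
      field_simp
  · have h1 : ¬ (j+1 ≤ (i:ℕ)) := by omega
    simp only [if_neg hji, if_neg h1, zero_mul]
    exact hasDerivAt_const _ _

lemma continuous_Qf (n : ℕ) (a : ℝ) (d : Fin n → ℝ) (j : ℕ) :
    Continuous (Qf n a d j) := by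
  unfold Qf
  refine continuous_finset_sum _ fun i _ => ?_
  by_cases hji : j ≤ (i:ℕ)
  · simp only [if_pos hji]; fun_prop
  · simp only [if_neg hji, zero_mul]; exact continuous_const

lemma Qf_top (n : ℕ) (a : ℝ) (d : Fin n → ℝ) (s : ℝ) : Qf n a d n s = 0 := by
  unfold Qf
  refine Finset.sum_eq_zero fun i _ => ?_
  rw [if_neg (Nat.not_le.mpr i.isLt), zero_mul]

open Matrix

lemma Wmat_zero (n : ℕ) : Wmat n 0 = 1 := by
  ext i j
  rw [Wmat, Matrix.one_apply]
  rcases lt_trichotomy (i:ℕ) (j:ℕ) with h | h | h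
  · rw [if_pos h.le, if_neg (by simpa using Fin.ne_of_lt (by exact h))]
    rw [zero_pow (by omega)]
    simp
  · rw [if_pos h.le, if_pos (Fin.ext h), h, Nat.sub_self]
    simp
  · rw [if_neg (by omega), if_neg (by simpa using Fin.ne_of_gt (by exact h))]

lemma Qf_eq_mulVec (n : ℕ) (a : ℝ) (d : Fin n → ℝ) (j : Fin n) (s : ℝ) :
    Qf n a d (j:ℕ) s = (Wmat n (s-a)).mulVec d j := by
  simp [Qf, Wmat, Matrix.mulVec, dotProduct]

lemma Qf_at_a (n : ℕ) (a : ℝ) (d : Fin n → ℝ) (j : Fin n) :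
    Qf n a d (j:ℕ) a = d j := by
  rw [Qf_eq_mulVec, sub_self, Wmat_zero, Matrix.one_mulVec]

noncomputable def wnat (x : ℝ → ℝ) (a b : ℝ) (n : ℕ) (i : ℕ) : ℝ :=
  ∫ θ in a..b, (a-θ)^(n-1-i) / (Nat.factorial (n-1-i)) * x θ

noncomputable def wvec (x : ℝ → ℝ) (a b : ℝ) (n : ℕ) : Fin n → ℝ :=
  fun i => wnat x a b n (i:ℕ)

lemma shift_sum {x : ℝ → ℝ} (hx : Continuous x) (a b : ℝ) (p : ℕ) :
    (∫ θ in a..b, (b-θ)^p / (Nat.factorial p) * x θ)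
      = ∑ k ∈ Finset.range (p+1), (b-a)^k / (Nat.factorial k)
          * ∫ θ in a..b, (a-θ)^(p-k) / (Nat.factorial (p-k)) * x θ := by
  have h1 : ∀ θ : ℝ, (b-θ)^p / (Nat.factorial p) * x θ
      = ∑ k ∈ Finset.range (p+1), (b-a)^k / (Nat.factorial k)
          * ((a-θ)^(p-k) / (Nat.factorial (p-k)) * x θ) := by
    intro θ
    have := binom_sum p (b-a) (a-θ)
    rw [show b-a + (a-θ) = b - θ by ring] at this
    rw [← this, Finset.sum_mul]
    exact Finset.sum_congr rfl fun k _ => by ring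
  rw [intervalIntegral.integral_congr (fun θ _ => h1 θ),
    intervalIntegral.integral_finset_sum]
  · exact Finset.sum_congr rfl fun k _ => intervalIntegral.integral_const_mul _ _
  · intro k _
    refine (Continuous.intervalIntegrable ?_ _ _)
    fun_prop

lemma Jfun_at_b {x : ℝ → ℝ} (hx : Continuous x) (a b : ℝ) (n j : ℕ)
    (hn : 1 ≤ n) (hj : j < n) :
    Jfun x a (n-1-j) b = Qf n a (wvec x a b n) j b := by
  unfold Jfun Qf
  rw [shift_sum hx a b (n-1-j)]
  have hrange : n - 1 - j + 1 = n - j := by omega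
  rw [hrange]
  have hfil : ∑ i ∈ Finset.range n,
      (if j ≤ i then (b-a)^(i-j) / (Nat.factorial (i-j)) else 0) * wnat x a b n i
      = ∑ i ∈ Finset.Ico j n, (b-a)^(i-j) / (Nat.factorial (i-j)) * wnat x a b n i := by
    simp only [ite_mul, zero_mul]
    rw [← Finset.sum_filter]
    · congr 1
      ext i
      simp only [Finset.mem_filter, Finset.mem_range, Finset.mem_Ico]
      omega
  simp only [wvec]
  rw [Fin.sum_univ_eq_sum_range (fun i =>
    (if j ≤ i then (b-a)^(i-j) / (Nat.factorial (i-j)) else 0) * wnat x a b n i) n]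
  rw [hfil, Finset.sum_Ico_eq_sum_range]
  refine Finset.sum_congr rfl fun k hk => ?_
  rw [Nat.add_sub_cancel_left]
  unfold wnat
  rw [show n - 1 - (j + k) = n - 1 - j - k by omega]

lemma dot_e1_en (n : ℕ) (hn : 1 ≤ n) (u v : ℝ) :
    dotProduct (e1vec n u) (envec n v) = (u+v)^(n-1) / (Nat.factorial (n-1)) := by
  rw [← binom_sum (n-1) u v, show n-1+1 = n by omega, dotProduct]
  simp only [e1vec, envec]
  exact Fin.sum_univ_eq_sum_range
    (fun i => u^i/(Nat.factorial i) * (v^(n-1-i)/(Nat.factorial (n-1-i)))) n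

lemma vec_eq_zero_of_mulVec {n : ℕ} {M : Matrix (Fin n) (Fin n) ℝ} (h : IsUnit M)
    {v : Fin n → ℝ} (hv : M.mulVec v = 0) : v = 0 := by
  have hdet := M.isUnit_iff_isUnit_det.mp h
  rw [← Matrix.one_mulVec v, ← Matrix.nonsing_inv_mul M hdet, ← Matrix.mulVec_mulVec, hv,
    Matrix.mulVec_zero]

/-- the partial-integral operator `T` with the polynomial kernel `G`
built from the boundary-condition matrices `N_a, N_b` is a bijection between `L₂`
and the subspace of `n`-times continuously differentiable functions on `[a,b]`
satisfying the boundary conditions: `(T x)⁽ⁿ⁾ = x` with `T x` satisfying the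
boundary conditions, and `T (g⁽ⁿ⁾) = g` whenever `g` satisfies them. -/
theorem fundamental_state_bijection
    (n : ℕ) (hn : 1 ≤ n) (a b : ℝ) (hab : a < b)
    (Na Nb : Matrix (Fin n) (Fin n) ℝ)
    (hinv : IsUnit (Na + Nb * Wmat n (b - a)))
    (P : Matrix (Fin n) (Fin n) ℝ)
    (hP : P = (Na + Nb * Wmat n (b - a))⁻¹ * (Nb * Wmat n (b - a)))
    (G : ℝ → ℝ → ℝ)
    (hG : ∀ s θ : ℝ,
      G s θ = if θ ≤ s
        then dotProduct (e1vec n (s - a)) (Matrix.mulVec (1 - P) (envec n (a - θ)))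
        else -(dotProduct (e1vec n (s - a)) (Matrix.mulVec P (envec n (a - θ)))))
    (T : (ℝ → ℝ) → (ℝ → ℝ))
    (hT : ∀ (x : ℝ → ℝ) (s : ℝ), T x s = ∫ θ in Set.Icc a b, G s θ * x θ)
    (BC : (ℝ → ℝ) → Prop)
    (hBC : ∀ g : ℝ → ℝ, BC g ↔ ∀ i : Fin n,
      (∑ j : Fin n, (Na i j * iteratedDerivWithin (j : ℕ) g (Set.Icc a b) a
        + Nb i j * iteratedDerivWithin (j : ℕ) g (Set.Icc a b) b)) = 0) :
    (∀ x : ℝ → ℝ, Continuous x →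
      ContDiffOn ℝ n (T x) (Set.Icc a b) ∧ BC (T x) ∧
      ∀ s ∈ Set.Icc a b, iteratedDerivWithin n (T x) (Set.Icc a b) s = x s) ∧
    (∀ g : ℝ → ℝ, ContDiffOn ℝ n g (Set.Icc a b) → BC g →
      ∀ s ∈ Set.Icc a b, T (iteratedDerivWithin n g (Set.Icc a b)) s = g s) := by
  have hud := uniqueDiffOn_Icc hab
  have hain : a ∈ Set.Icc a b := Set.left_mem_Icc.mpr hab.le
  have hbin : b ∈ Set.Icc a b := Set.right_mem_Icc.mpr hab.le
  set W := Wmat n (b-a) with hW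
  have hMP : (Na + Nb * W) * P = Nb * W := by
    rw [hP, ← mul_assoc, Matrix.mul_nonsing_inv _ ((Matrix.isUnit_iff_isUnit_det _).mp hinv),
      one_mul]
  have part1 : ∀ x : ℝ → ℝ, Continuous x →
      ContDiffOn ℝ n (T x) (Set.Icc a b) ∧ BC (T x) ∧
      ∀ s ∈ Set.Icc a b, iteratedDerivWithin n (T x) (Set.Icc a b) s = x s := by
    intro x hx
    set w : Fin n → ℝ := wvec x a b n with hwdef
    set d : Fin n → ℝ := -(P.mulVec w) with hddef
    set ch : ℕ → ℝ → ℝ :=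
      fun j s => (if j ≤ n-1 then Jfun x a (n-1-j) s else x s) + Qf n a d j s with hch
    have hchain : ∀ k, k < n → ∀ s : ℝ, HasDerivAt (ch k) (ch (k+1) s) s := by
      intro k hk s
      by_cases hk1 : k < n-1
      · have e1 : k ≤ n-1 := by omega
        have e2 : k+1 ≤ n-1 := by omega
        simp only [hch, if_pos e1, if_pos e2]
        have hJ : HasDerivAt (Jfun x a (n-1-k)) (Jfun x a (n-1-(k+1)) s) s := by
          rw [show n-1-k = (n-1-(k+1))+1 by omega]
          exact hasDerivAt_Jfun_succ hx a _ s
        exact hJ.add (hasDerivAt_Qf n a d k s)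
      · have e1 : k ≤ n-1 := by omega
        have e2 : ¬ (k+1 ≤ n-1) := by omega
        have e3 : n-1-k = 0 := by omega
        simp only [hch, if_pos e1, if_neg e2, e3]
        exact (hasDerivAt_Jfun_zero hx a s).add (hasDerivAt_Qf n a d k s)
    have hcontn : Continuous (ch n) := by
      have hnn : ¬ (n ≤ n-1) := by omega
      simp only [hch, if_neg hnn]
      exact hx.add (continuous_Qf n a d n)
    have hTeq : Set.EqOn (T x) (ch 0) (Set.Icc a b) := by
      intro s hs
      rw [hT]
      have hgc : Continuous (fun θ : ℝ => (s-θ)^(n-1)/(Nat.factorial (n-1)) * x θ) := by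
        fun_prop
      have hfc : Continuous (fun θ : ℝ =>
          dotProduct (e1vec n (s-a)) (P.mulVec (envec n (a-θ))) * x θ) := by
        simp only [dotProduct, Matrix.mulVec, envec]
        fun_prop
      have hsplit : ∀ θ : ℝ, G s θ * x θ
          = (Set.indicator (Set.Iic s)
              (fun θ => (s-θ)^(n-1)/(Nat.factorial (n-1)) * x θ)) θ
            - dotProduct (e1vec n (s-a)) (P.mulVec (envec n (a-θ))) * x θ := by
        intro θ
        rw [hG]
        by_cases h : θ ≤ s
        · rw [if_pos h, Set.indicator_of_mem (Set.mem_Iic.mpr h)]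
          rw [Matrix.sub_mulVec, Matrix.one_mulVec, dotProduct_sub]
          rw [show s-θ = (s-a)+(a-θ) by ring, dot_e1_en n hn (s-a) (a-θ)]
          ring
        · rw [if_neg h, Set.indicator_of_notMem (by simpa using h)]
          ring
      rw [setIntegral_congr_fun measurableSet_Icc (fun θ _ => hsplit θ)]
      have hint1 : IntegrableOn (Set.indicator (Set.Iic s)
          (fun θ => (s-θ)^(n-1)/(Nat.factorial (n-1)) * x θ)) (Set.Icc a b) volume :=
        (hgc.integrableOn_Icc).indicator measurableSet_Iic
      have hint2 : IntegrableOn (fun θ : ℝ =>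
          dotProduct (e1vec n (s-a)) (P.mulVec (envec n (a-θ))) * x θ)
          (Set.Icc a b) volume := hfc.integrableOn_Icc
      rw [MeasureTheory.integral_sub hint1 hint2]
      have hIa : (∫ θ in Set.Icc a b, Set.indicator (Set.Iic s)
            (fun θ => (s-θ)^(n-1)/(Nat.factorial (n-1)) * x θ) θ)
          = Jfun x a (n-1) s := by
        rw [setIntegral_indicator measurableSet_Iic]
        rw [show Set.Icc a b ∩ Set.Iic s = Set.Icc a s from Set.ext fun θ => by
          simp only [Set.mem_inter_iff, Set.mem_Icc, Set.mem_Iic]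
          exact ⟨fun h => ⟨h.1.1, h.2⟩, fun h => ⟨⟨h.1, le_trans h.2 hs.2⟩, h.2⟩⟩]
        rw [integral_Icc_eq_integral_Ioc, ← intervalIntegral.integral_of_le hs.1]
        rfl
      have hIb : (∫ θ in Set.Icc a b,
            dotProduct (e1vec n (s-a)) (P.mulVec (envec n (a-θ))) * x θ)
          = - Qf n a d 0 s := by
        have hθ : ∀ θ : ℝ, dotProduct (e1vec n (s-a)) (P.mulVec (envec n (a-θ))) * x θ
            = ∑ i : Fin n, ∑ j : Fin n, e1vec n (s-a) i * P i j
                * ((a-θ)^(n-1-(j:ℕ))/(Nat.factorial (n-1-(j:ℕ))) * x θ) := by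
          intro θ
          simp only [dotProduct, Matrix.mulVec, envec]
          rw [Finset.sum_mul]
          refine Finset.sum_congr rfl fun i _ => ?_
          rw [Finset.mul_sum, Finset.sum_mul]
          exact Finset.sum_congr rfl fun j _ => by ring
        rw [setIntegral_congr_fun measurableSet_Icc (fun θ _ => hθ θ)]
        rw [MeasureTheory.integral_finset_sum]
        · have hinner : ∀ i : Fin n, (∫ θ in Set.Icc a b, ∑ j : Fin n,
              e1vec n (s-a) i * P i j
                * ((a-θ)^(n-1-(j:ℕ))/(Nat.factorial (n-1-(j:ℕ))) * x θ))
              = ∑ j : Fin n, e1vec n (s-a) i * P i j * wnat x a b n (j:ℕ) := by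
            intro i
            rw [MeasureTheory.integral_finset_sum]
            · refine Finset.sum_congr rfl fun j _ => ?_
              rw [MeasureTheory.integral_const_mul]
              congr 1
              unfold wnat
              rw [intervalIntegral.integral_of_le hab.le, integral_Icc_eq_integral_Ioc]
            · intro j _
              apply Continuous.integrableOn_Icc
              fun_prop
          rw [Finset.sum_congr rfl (fun i _ => hinner i)]
          simp only [Qf, hddef, Nat.sub_zero, Nat.le_zero_eq]
          rw [← Finset.sum_neg_distrib]
          refine Finset.sum_congr rfl fun i _ => ?_
          rw [if_pos (Nat.zero_le _)]
          simp only [Pi.neg_apply, Matrix.mulVec, dotProduct, hwdef, wvec, e1vec]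
          rw [mul_neg, neg_neg, Finset.mul_sum]
          exact Finset.sum_congr rfl fun j _ => by ring
        · intro i _
          apply Continuous.integrableOn_Icc
          apply continuous_finset_sum
          intro j _
          fun_prop
      rw [hIa, hIb]
      simp only [hch]
      rw [if_pos (Nat.zero_le _), Nat.sub_zero]
      ring
    have hEq : ∀ j, j ≤ n →
        ∀ s ∈ Set.Icc a b, iteratedDerivWithin j (T x) (Set.Icc a b) s = ch j s := by
      intro j hj s hs
      rw [iteratedDerivWithin_congr hTeq hs]
      exact chain_iteratedDerivWithin hab ch n hchain j hj hs
    refine ⟨(chain_contDiffOn hab ch n hchain hcontn).congr hTeq, ?_, ?_⟩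
    · rw [hBC]
      intro i
      have hDa : ∀ j : Fin n, iteratedDerivWithin (j:ℕ) (T x) (Set.Icc a b) a = d j := by
        intro j
        rw [hEq (j:ℕ) (le_of_lt j.isLt) a hain]
        simp only [hch]
        rw [if_pos (by omega : (j:ℕ) ≤ n-1)]
        have hz : Jfun x a (n-1-(j:ℕ)) a = 0 := intervalIntegral.integral_same
        rw [hz, zero_add, Qf_at_a]
      have hDb : ∀ j : Fin n, iteratedDerivWithin (j:ℕ) (T x) (Set.Icc a b) b
          = (W.mulVec w) j + (W.mulVec d) j := by
        intro j
        rw [hEq (j:ℕ) (le_of_lt j.isLt) b hbin]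
        simp only [hch]
        rw [if_pos (by omega : (j:ℕ) ≤ n-1)]
        rw [Jfun_at_b hx a b n (j:ℕ) hn j.isLt]
        rw [Qf_eq_mulVec, Qf_eq_mulVec, ← hW]
      have hvec : Na.mulVec d + Nb.mulVec (W.mulVec w + W.mulVec d) = 0 := by
        calc Na.mulVec d + Nb.mulVec (W.mulVec w + W.mulVec d)
            = Na.mulVec d + ((Nb*W).mulVec w + (Nb*W).mulVec d) := by
              rw [Matrix.mulVec_add, Matrix.mulVec_mulVec, Matrix.mulVec_mulVec]
          _ = ((Na + Nb*W).mulVec d) + (Nb*W).mulVec w := by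
              rw [Matrix.add_mulVec]; abel
          _ = -(((Na + Nb*W)*P).mulVec w) + (Nb*W).mulVec w := by
              rw [hddef, Matrix.mulVec_neg, Matrix.mulVec_mulVec]
          _ = 0 := by rw [hMP]; exact neg_add_cancel _
      have hsum : ∀ j : Fin n,
          Na i j * iteratedDerivWithin (j:ℕ) (T x) (Set.Icc a b) a
            + Nb i j * iteratedDerivWithin (j:ℕ) (T x) (Set.Icc a b) b
          = Na i j * d j + Nb i j * ((W.mulVec w) j + (W.mulVec d) j) := fun j => by
        rw [hDa j, hDb j]
      rw [Finset.sum_congr rfl (fun j _ => hsum j), Finset.sum_add_distrib]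
      have := congrFun hvec i
      simpa [Matrix.mulVec, dotProduct] using this
    · intro s hs
      rw [hEq n le_rfl s hs]
      simp only [hch]
      rw [if_neg (by omega : ¬ n ≤ n-1), Qf_top, add_zero]
  refine ⟨part1, ?_⟩
  intro g hg hgBC s hs
  set xg := iteratedDerivWithin n g (Set.Icc a b) with hxg
  have hxgc : ContinuousOn xg (Set.Icc a b) :=
    hg.continuousOn_iteratedDerivWithin le_rfl hud
  set x : ℝ → ℝ := Set.IccExtend hab.le ((Set.Icc a b).restrict xg) with hxdef
  have hxc : Continuous x := Continuous.Icc_extend' (hxgc.restrict)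
  have hxeq : Set.EqOn x xg (Set.Icc a b) := fun t ht => by
    rw [hxdef, Set.IccExtend_of_mem hab.le _ ht]
    rfl
  obtain ⟨hcd, hbc2, hdn⟩ := part1 x hxc
  have hTg : T xg s = T x s := by
    rw [hT xg s, hT x s]
    exact setIntegral_congr_fun measurableSet_Icc (fun θ hθ => by rw [hxeq hθ])
  set ε : Fin n → ℝ := fun j =>
    iteratedDerivWithin (j:ℕ) g (Set.Icc a b) a
      - iteratedDerivWithin (j:ℕ) (T x) (Set.Icc a b) a with hepsdef
  have key : ∀ k j, j + k = n → ∀ t ∈ Set.Icc a b,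
      iteratedDerivWithin j g (Set.Icc a b) t
        - iteratedDerivWithin j (T x) (Set.Icc a b) t = Qf n a ε j t := by
    intro k
    induction k with
    | zero =>
      intro j hj t ht
      have hj' : j = n := by omega
      subst hj'
      rw [hdn t ht, Qf_top, ← hxg, ← hxeq ht]
      exact sub_self _
    | succ k IH =>
      intro j hj t ht
      have hjn : j < n := by omega
      have derivf : ∀ y ∈ Set.Ico a b, HasDerivWithinAt
          (fun t => iteratedDerivWithin j g (Set.Icc a b) t
            - iteratedDerivWithin j (T x) (Set.Icc a b) t)
          (Qf n a ε (j+1) y) (Set.Ici y) y := by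
        intro y hy
        have hyI : y ∈ Set.Icc a b := Set.mem_Icc_of_Ico hy
        have h1 : HasDerivWithinAt (iteratedDerivWithin j g (Set.Icc a b))
            (iteratedDerivWithin (j+1) g (Set.Icc a b) y) (Set.Icc a b) y := by
          have hdiff := (hg.differentiableOn_iteratedDerivWithin
            (by exact_mod_cast hjn) hud) y hyI
          have h := hdiff.hasDerivWithinAt
          rwa [← iteratedDerivWithin_succ] at h
        have h2 : HasDerivWithinAt (iteratedDerivWithin j (T x) (Set.Icc a b))
            (iteratedDerivWithin (j+1) (T x) (Set.Icc a b) y) (Set.Icc a b) y := by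
          have hdiff := (hcd.differentiableOn_iteratedDerivWithin
            (by exact_mod_cast hjn) hud) y hyI
          have h := hdiff.hasDerivWithinAt
          rwa [← iteratedDerivWithin_succ] at h
        have h3 := h1.sub h2
        rw [IH (j+1) (by omega) y hyI] at h3
        exact h3.mono_of_mem_nhdsWithin (Icc_mem_nhdsGE_of_mem hy)
      have derivq : ∀ y ∈ Set.Ico a b, HasDerivWithinAt (Qf n a ε j)
          (Qf n a ε (j+1) y) (Set.Ici y) y :=
        fun y _ => (hasDerivAt_Qf n a ε j y).hasDerivWithinAt
      have fcont : ContinuousOn (fun t => iteratedDerivWithin j g (Set.Icc a b) t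
          - iteratedDerivWithin j (T x) (Set.Icc a b) t) (Set.Icc a b) :=
        (hg.continuousOn_iteratedDerivWithin (by exact_mod_cast hjn.le) hud).sub
          (hcd.continuousOn_iteratedDerivWithin (by exact_mod_cast hjn.le) hud)
      have hi : iteratedDerivWithin j g (Set.Icc a b) a
          - iteratedDerivWithin j (T x) (Set.Icc a b) a = Qf n a ε j a := by
        have hq := Qf_at_a n a ε ⟨j, hjn⟩
        simpa [hepsdef] using hq.symm
      exact eq_of_has_deriv_right_eq derivf derivq fcont
        (continuous_Qf n a ε j).continuousOn hi t ht
  have hεz : ε = 0 := by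
    apply vec_eq_zero_of_mulVec hinv
    funext i
    have h1 := (hBC g).mp hgBC i
    have h2 := (hBC (T x)).mp hbc2 i
    have hψ : ∀ j : Fin n,
        iteratedDerivWithin (j:ℕ) g (Set.Icc a b) b
          - iteratedDerivWithin (j:ℕ) (T x) (Set.Icc a b) b = (W.mulVec ε) j := by
      intro j
      rw [key (n - (j:ℕ)) (j:ℕ) (by omega) b hbin, Qf_eq_mulVec, ← hW]
    have hsum : ∑ j : Fin n, (Na i j * ε j + Nb i j * (W.mulVec ε) j) = 0 := by
      calc ∑ j : Fin n, (Na i j * ε j + Nb i j * (W.mulVec ε) j)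
          = ∑ j : Fin n,
              ((Na i j * iteratedDerivWithin (j:ℕ) g (Set.Icc a b) a
                  + Nb i j * iteratedDerivWithin (j:ℕ) g (Set.Icc a b) b)
                - (Na i j * iteratedDerivWithin (j:ℕ) (T x) (Set.Icc a b) a
                  + Nb i j * iteratedDerivWithin (j:ℕ) (T x) (Set.Icc a b) b)) := by
            refine Finset.sum_congr rfl fun j _ => ?_
            rw [← hψ j]
            simp only [hepsdef]
            ring
        _ = 0 := by rw [Finset.sum_sub_distrib, h1, h2, sub_zero]
    show ((Na + Nb * W).mulVec ε) i = 0
    rw [Matrix.add_mulVec]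
    rw [show ((Nb * W).mulVec ε) = Nb.mulVec (W.mulVec ε) from
      (Matrix.mulVec_mulVec ε Nb W).symm]
    show (Na.mulVec ε) i + (Nb.mulVec (W.mulVec ε)) i = 0
    simp only [Matrix.mulVec, dotProduct] at hsum ⊢
    rw [← Finset.sum_add_distrib]
    exact hsum
  have h0 := key n 0 (by omega) s hs
  simp only [iteratedDerivWithin_zero] at h0
  rw [hεz] at h0
  have hQ0 : Qf n a (0 : Fin n → ℝ) 0 s = 0 := by simp [Qf]
  rw [hQ0] at h0
  rw [hTg]
  linarith [h0]
end
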